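/- Let g : [0, S] → ℝ be C¹ with −B ≤ g(s) ≤ −B/2 for all s (where B > 0), and |g'(s)| ≤ B. Then there is a constant C(B, S), depending only on B and S, such that for all x > 0, | ∫₀^S sin(xs)/(s·g(s)) ds | ≤ C(B, S). -/

import Mathlib

open intervalIntegral

open MeasureTheory in
lemma my_intervalIntegrable_of_bounded {f : ℝ → ℝ} {a b C : ℝ}
    (hm : AEStronglyMeasurable f (volume.restrict (Set.uIoc a b)))
    (hC : ∀ t ∈ Set.uIoc a b, |f t| ≤ C) :
    IntervalIntegrable f volume a b := by
  rw [intervalIntegrable_iff]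
  refine MeasureTheory.Integrable.mono' (g := fun _ => |C|)
    (MeasureTheory.integrableOn_const ?_) hm ?_
  · rw [Set.uIoc]; exact measure_Ioc_lt_top.ne
  · exact (MeasureTheory.ae_restrict_iff' measurableSet_uIoc).2
      (MeasureTheory.ae_of_all _ fun t ht => by
        simpa [Real.norm_eq_abs] using (hC t ht).trans (le_abs_self C))

lemma sinc_intervalIntegrable (a b : ℝ) :
    IntervalIntegrable (fun t => Real.sin t / t) MeasureTheory.volume a b := by
  refine my_intervalIntegrable_of_bounded (C := 1)
    ((Real.continuous_sin.measurable.div measurable_id).aestronglyMeasurable) ?_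
  intro t _
  rcases eq_or_ne t 0 with rfl | ht
  · simp
  · rw [abs_div]
    exact div_le_one_of_le₀ Real.abs_sin_le_abs (abs_nonneg t)

lemma si_bound {T : ℝ} (hT : 0 ≤ T) : |∫ t in (0:ℝ)..T, Real.sin t / t| ≤ 5 := by
  have hb1 : ∀ a b : ℝ, 0 ≤ b - a → |∫ t in a..b, Real.sin t / t| ≤ b - a := by
    intro a b hab
    have h := intervalIntegral.norm_integral_le_of_norm_le_const (C := 1)
      (f := fun t => Real.sin t / t) (a := a) (b := b) ?_
    · simpa [Real.norm_eq_abs, abs_of_nonneg hab] using h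
    · intro t _
      rcases eq_or_ne t 0 with rfl | ht
      · simp
      · rw [Real.norm_eq_abs, abs_div]
        exact div_le_one_of_le₀ Real.abs_sin_le_abs (abs_nonneg t)
  rcases le_or_gt T 1 with h1 | h1
  · have h := hb1 0 T (by linarith)
    simp only [sub_zero] at h
    linarith
  have hT1 : (1:ℝ) ≤ T := h1.le
  have hsplit : (∫ t in (0:ℝ)..1, Real.sin t / t) + (∫ t in (1:ℝ)..T, Real.sin t / t)
      = ∫ t in (0:ℝ)..T, Real.sin t / t :=
    intervalIntegral.integral_add_adjacent_intervals (sinc_intervalIntegrable 0 1)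
      (sinc_intervalIntegrable 1 T)
  have h01 : |∫ t in (0:ℝ)..1, Real.sin t / t| ≤ 1 := by
    have h := hb1 0 1 (by norm_num); simpa using h
  have hupos : ∀ t ∈ Set.uIcc (1:ℝ) T, 0 < t := by
    intro t ht
    rw [Set.uIcc_of_le hT1] at ht
    linarith [ht.1]
  have hu : ∀ t ∈ Set.uIcc (1:ℝ) T, HasDerivAt (fun u : ℝ => u⁻¹) (-(t^2)⁻¹) t :=
    fun t ht => hasDerivAt_inv (hupos t ht).ne'
  have hv : ∀ t ∈ Set.uIcc (1:ℝ) T, HasDerivAt (fun u : ℝ => -Real.cos u) (Real.sin t) t :=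
    fun t _ => by simpa using (Real.hasDerivAt_cos t).fun_neg
  have hcont2 : ContinuousOn (fun t : ℝ => (t^2)⁻¹) (Set.uIcc 1 T) :=
    (continuousOn_id.pow 2).inv₀ fun t ht => by have := hupos t ht; exact pow_ne_zero 2 this.ne'
  have hu2' : IntervalIntegrable (fun t : ℝ => (t^2)⁻¹) MeasureTheory.volume 1 T :=
    hcont2.intervalIntegrable
  have hu' : IntervalIntegrable (fun t : ℝ => -(t^2)⁻¹) MeasureTheory.volume 1 T := hu2'.neg
  have hv' : IntervalIntegrable Real.sin MeasureTheory.volume 1 T :=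
    Real.continuous_sin.intervalIntegrable 1 T
  have hibp := intervalIntegral.integral_mul_deriv_eq_deriv_mul hu hv hu' hv'
  have hcongr : (∫ t in (1:ℝ)..T, Real.sin t / t) = ∫ t in (1:ℝ)..T, t⁻¹ * Real.sin t :=
    intervalIntegral.integral_congr fun t _ => by rw [div_eq_inv_mul]
  have hrem_int : (∫ t in (1:ℝ)..T, (t^2)⁻¹) = 1 - T⁻¹ := by
    have h := intervalIntegral.integral_eq_sub_of_hasDerivAt
      (f := fun t : ℝ => -t⁻¹) (f' := fun t : ℝ => (t^2)⁻¹) (a := 1) (b := T)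
      (fun t ht => by simpa using (hasDerivAt_inv (hupos t ht).ne').fun_neg) hu2'
    rw [h]; ring
  have hTinv : 0 ≤ T⁻¹ ∧ T⁻¹ ≤ 1 := by
    constructor
    · positivity
    · rw [inv_le_one_iff₀]; right; linarith
  have hrem : |∫ t in (1:ℝ)..T, -(t^2)⁻¹ * -Real.cos t| ≤ 1 := by
    have h := intervalIntegral.norm_integral_le_of_norm_le
      (f := fun t : ℝ => -(t^2)⁻¹ * -Real.cos t) (g := fun t : ℝ => (t^2)⁻¹)
      (a := 1) (b := T) (μ := MeasureTheory.volume)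
      hT1 (MeasureTheory.ae_of_all _ fun t _ => ?_) hu2'
    · rw [Real.norm_eq_abs] at h
      refine h.trans ?_
      rw [hrem_int]
      linarith [hTinv.1]
    · show ‖-(t^2)⁻¹ * -Real.cos t‖ ≤ (t^2)⁻¹
      rw [Real.norm_eq_abs, neg_mul_neg, abs_mul, abs_of_nonneg (by positivity : (0:ℝ) ≤ (t^2)⁻¹)]
      calc (t^2)⁻¹ * |Real.cos t| ≤ (t^2)⁻¹ * 1 := by
            have := Real.abs_cos_le_one t
            gcongr
        _ = (t^2)⁻¹ := mul_one _
  have h1T : |∫ t in (1:ℝ)..T, Real.sin t / t| ≤ 4 := by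
    rw [hcongr, hibp]
    have hc1 : |T⁻¹ * -Real.cos T| ≤ 1 := by
      rw [abs_mul, abs_neg]
      calc |T⁻¹| * |Real.cos T| ≤ 1 * 1 := by
            refine mul_le_mul ?_ (Real.abs_cos_le_one T) (abs_nonneg _) zero_le_one
            rw [abs_of_nonneg hTinv.1]; exact hTinv.2
        _ = 1 := mul_one 1
    have hc2 : |(1:ℝ)⁻¹ * -Real.cos 1| ≤ 1 := by
      rw [abs_mul, abs_neg]
      simpa using Real.abs_cos_le_one 1
    calc |T⁻¹ * -Real.cos T - 1⁻¹ * -Real.cos 1 - ∫ t in (1:ℝ)..T, -(t^2)⁻¹ * -Real.cos t|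
        ≤ |T⁻¹ * -Real.cos T| + |(1:ℝ)⁻¹ * -Real.cos 1|
            + |∫ t in (1:ℝ)..T, -(t^2)⁻¹ * -Real.cos t| := by
          exact (abs_sub _ _).trans (add_le_add (abs_sub _ _) le_rfl)
      _ ≤ 1 + 1 + 1 := add_le_add (add_le_add hc1 hc2) hrem
      _ ≤ 4 := by norm_num
  calc |∫ t in (0:ℝ)..T, Real.sin t / t|
      = |(∫ t in (0:ℝ)..1, Real.sin t / t) + ∫ t in (1:ℝ)..T, Real.sin t / t| := by rw [hsplit]
    _ ≤ |∫ t in (0:ℝ)..1, Real.sin t / t| + |∫ t in (1:ℝ)..T, Real.sin t / t| := abs_add_le _ _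
    _ ≤ 1 + 4 := by gcongr
    _ = 5 := by norm_num


lemma si_subst {x S : ℝ} (hx : 0 < x) :
    (∫ s in (0:ℝ)..S, Real.sin (x*s) / s) = ∫ t in (0:ℝ)..(x*S), Real.sin t / t := by
  have h := intervalIntegral.integral_comp_mul_left (a := (0:ℝ)) (b := S)
    (fun t => Real.sin t / t) hx.ne'
  have h2 : (∫ s in (0:ℝ)..S, Real.sin (x*s) / s)
      = x * ∫ s in (0:ℝ)..S, Real.sin (x*s) / (x*s) := by
    rw [← intervalIntegral.integral_const_mul]
    refine intervalIntegral.integral_congr fun s _ => ?_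
    rcases eq_or_ne s 0 with rfl | hs
    · simp
    · field_simp
  rw [h2, h]
  rw [mul_zero] at *
  rw [smul_eq_mul, ← mul_assoc, mul_inv_cancel₀ hx.ne', one_mul]

/-- The key oscillatory-integral estimate: if `g` is `C¹` on `[0,S]` with
`−B ≤ g ≤ −B/2` and `|g'| ≤ B`, then `|∫₀^S sin(xs)/(s·g(s)) ds|` is bounded by a
constant depending only on `B` and `S`, uniformly over `x > 0`. -/
theorem stmt_11 (B S : ℝ) (hB : 0 < B) (hS : 0 < S) :
    ∃ C : ℝ, ∀ g : ℝ → ℝ, ContDiffOn ℝ 1 g (Set.Icc 0 S) →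
      (∀ s ∈ Set.Icc (0:ℝ) S, -B ≤ g s ∧ g s ≤ -(B/2)) →
      (∀ s ∈ Set.Icc (0:ℝ) S, |deriv g s| ≤ B) →
      ∀ x : ℝ, 0 < x →
        |∫ s in (0:ℝ)..S, Real.sin (x * s) / (s * g s)| ≤ C := by
  refine ⟨2/B*5 + 4/B*S, ?_⟩
  intro g hg hrange hder x hx
  have hB2 : (0:ℝ) < B/2 := by positivity
  have hg0le : g 0 ≤ -(B/2) := (hrange 0 ⟨le_rfl, hS.le⟩).2
  have hg0abs : B/2 ≤ |g 0| := by rw [abs_of_neg (by linarith)]; linarith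
  have hg0ne : g 0 ≠ 0 := by intro h; rw [h] at hg0le; linarith
  -- bound on derivWithin over Icc
  have hderW : ∀ t ∈ Set.Icc (0:ℝ) S, |derivWithin g (Set.Icc 0 S) t| ≤ B := by
    have hcd : ContinuousOn (derivWithin g (Set.Icc 0 S)) (Set.Icc 0 S) :=
      hg.continuousOn_derivWithin (uniqueDiffOn_Icc hS) le_rfl
    intro t ht
    have hcl : t ∈ closure (Set.Ioo (0:ℝ) S) := by
      rw [closure_Ioo hS.ne]; exact ht
    have hne : (nhdsWithin t (Set.Ioo (0:ℝ) S)).NeBot :=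
      mem_closure_iff_nhdsWithin_neBot.1 hcl
    have htend : Filter.Tendsto (fun u => |derivWithin g (Set.Icc 0 S) u|)
        (nhdsWithin t (Set.Ioo 0 S)) (nhds |derivWithin g (Set.Icc 0 S) t|) :=
      ((hcd t ht).mono Set.Ioo_subset_Icc_self).abs
    refine le_of_tendsto htend ?_
    filter_upwards [self_mem_nhdsWithin] with u hu
    rw [derivWithin_of_mem_nhds (Icc_mem_nhds hu.1 hu.2)]
    exact hder u (Set.Ioo_subset_Icc_self hu)
  -- Lipschitz bound from 0
  have hLip : ∀ s ∈ Set.Icc (0:ℝ) S, |g s - g 0| ≤ B * s := by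
    intro s hs
    have := norm_image_sub_le_of_norm_deriv_le_segment (a := 0) (b := S)
      (hg.differentiableOn one_ne_zero)
      (fun t ht => hderW t (Set.Ico_subset_Icc_self ht)) s hs
    simpa [Real.norm_eq_abs] using this
  -- bounds on g on Icc
  have hgabs : ∀ s ∈ Set.Icc (0:ℝ) S, B/2 ≤ |g s| := by
    intro s hs
    have h2 := (hrange s hs).2
    rw [abs_of_neg (by linarith)]; linarith
  have hgne : ∀ s ∈ Set.Icc (0:ℝ) S, g s ≠ 0 := by
    intro s hs h
    have h2 := (hrange s hs).2; rw [h] at h2; linarith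
  -- measurability of g on the interval
  have hIoc : Set.uIoc (0:ℝ) S = Set.Ioc 0 S := Set.uIoc_of_le hS.le
  have hsub : Set.uIoc (0:ℝ) S ⊆ Set.Icc 0 S := by
    rw [hIoc]; exact Set.Ioc_subset_Icc_self
  have hgm : MeasureTheory.AEStronglyMeasurable g
      (MeasureTheory.volume.restrict (Set.uIoc (0:ℝ) S)) :=
    (hg.continuousOn.aestronglyMeasurable measurableSet_Icc).mono_measure
      (MeasureTheory.Measure.restrict_mono hsub le_rfl)
  -- the three integrands
  set f : ℝ → ℝ := fun s => Real.sin (x * s) / (s * g s) with hf_def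
  set f1 : ℝ → ℝ := fun s => (g 0)⁻¹ * (Real.sin (x*s) / s) with hf1_def
  set f2 : ℝ → ℝ := fun s => f s - f1 s with hf2_def
  -- integrability
  have hsinb : ∀ s ∈ Set.uIoc (0:ℝ) S, |Real.sin (x*s) / s| ≤ x := by
    intro s hs
    rw [hIoc] at hs
    rw [abs_div, abs_of_pos hs.1]
    rw [div_le_iff₀ hs.1]
    calc |Real.sin (x*s)| ≤ |x*s| := Real.abs_sin_le_abs
      _ = x * s := abs_of_pos (mul_pos hx hs.1)
  have hf_int : IntervalIntegrable f MeasureTheory.volume 0 S := by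
    refine my_intervalIntegrable_of_bounded (C := x / (B/2))
      (((Real.continuous_sin.comp (continuous_const.mul continuous_id)).aemeasurable.div
        ((measurable_id.aemeasurable.mono_measure le_rfl).mul hgm.aemeasurable)).aestronglyMeasurable) ?_
    intro s hs
    have hs' := hs; rw [hIoc] at hs'
    have hsI : s ∈ Set.Icc (0:ℝ) S := hsub hs
    have hsp : 0 < s := hs'.1
    show |Real.sin (x*s) / (s * g s)| ≤ x / (B/2)
    rw [abs_div, abs_mul, abs_of_pos hsp]
    calc |Real.sin (x*s)| / (s * |g s|) ≤ (x * s) / (s * (B/2)) := by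
          apply div_le_div₀ (by positivity)
          · calc |Real.sin (x*s)| ≤ |x*s| := Real.abs_sin_le_abs
              _ = x * s := abs_of_pos (mul_pos hx hsp)
          · positivity
          · exact mul_le_mul_of_nonneg_left (hgabs s hsI) hsp.le
      _ = x / (B/2) := by
          rw [mul_comm x s, mul_div_mul_left _ _ hsp.ne']
  have hf1_int : IntervalIntegrable f1 MeasureTheory.volume 0 S := by
    refine my_intervalIntegrable_of_bounded (C := |(g 0)⁻¹| * x)
      ((((Real.continuous_sin.comp (continuous_const.mul continuous_id)).aemeasurable.div
        measurable_id.aemeasurable).const_mul _).aestronglyMeasurable) ?_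
    intro s hs
    show |(g 0)⁻¹ * (Real.sin (x*s) / s)| ≤ |(g 0)⁻¹| * x
    rw [abs_mul]
    exact mul_le_mul_of_nonneg_left (hsinb s hs) (abs_nonneg _)
  have hf2_int : IntervalIntegrable f2 MeasureTheory.volume 0 S := hf_int.sub hf1_int
  -- splitting
  have hsum : (∫ s in (0:ℝ)..S, f s) = (∫ s in (0:ℝ)..S, f1 s) + ∫ s in (0:ℝ)..S, f2 s := by
    rw [← intervalIntegral.integral_add hf1_int hf2_int]
    exact intervalIntegral.integral_congr fun s _ => by simp [hf2_def]
  -- bound for f1 integral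
  have hI1 : |∫ s in (0:ℝ)..S, f1 s| ≤ 2/B*5 := by
    rw [hf1_def]
    rw [intervalIntegral.integral_const_mul, si_subst hx, abs_mul]
    have h5 : |∫ t in (0:ℝ)..(x*S), Real.sin t / t| ≤ 5 := si_bound (by positivity)
    have hg0inv : |(g 0)⁻¹| ≤ 2/B := by
      rw [abs_inv, show (2:ℝ)/B = (B/2)⁻¹ by rw [inv_div]]
      gcongr
    exact mul_le_mul hg0inv h5 (abs_nonneg _) (by positivity)
  -- bound for f2 integral
  have hI2 : |∫ s in (0:ℝ)..S, f2 s| ≤ 4/B*S := by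
    have hbd : ∀ s ∈ Set.uIoc (0:ℝ) S, ‖f2 s‖ ≤ 4/B := by
      intro s hs
      have hs' := hs; rw [hIoc] at hs'
      have hsI : s ∈ Set.Icc (0:ℝ) S := hsub hs
      have hsp : 0 < s := hs'.1
      have hgs := hgne s hsI
      have heq : f2 s = Real.sin (x*s) * (g 0 - g s) / (s * (g s * g 0)) := by
        simp only [hf2_def, hf_def, hf1_def]
        field_simp
      rw [Real.norm_eq_abs, heq, abs_div, abs_mul, abs_mul, abs_mul,
        abs_of_pos hsp]
      calc |Real.sin (x*s)| * |g 0 - g s| / (s * (|g s| * |g 0|))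
          ≤ 1 * (B * s) / (s * (B/2 * (B/2))) := by
            apply div_le_div₀ (by positivity)
            · exact mul_le_mul (Real.abs_sin_le_one _)
                (by rw [abs_sub_comm]; exact hLip s hsI) (abs_nonneg _) zero_le_one
            · positivity
            · exact mul_le_mul_of_nonneg_left
                (mul_le_mul (hgabs s hsI) hg0abs hB2.le (abs_nonneg _)) hsp.le
        _ = 4/B := by
            field_simp
            ring
    have := intervalIntegral.norm_integral_le_of_norm_le_const (C := 4/B)
      (f := f2) (a := 0) (b := S) hbd
    calc |∫ s in (0:ℝ)..S, f2 s| ≤ 4/B * |S - 0| := this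
      _ = 4/B*S := by rw [sub_zero, abs_of_pos hS]
  calc |∫ s in (0:ℝ)..S, Real.sin (x * s) / (s * g s)|
      = |(∫ s in (0:ℝ)..S, f1 s) + ∫ s in (0:ℝ)..S, f2 s| := by rw [← hsum]
    _ ≤ |∫ s in (0:ℝ)..S, f1 s| + |∫ s in (0:ℝ)..S, f2 s| := abs_add_le _ _
    _ ≤ 2/B*5 + 4/B*S := add_le_add hI1 hI2
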